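/- Let H be a Hilbert space and X a closed subspace of B(H) containing the identity I. Suppose that for every x ∈ X with ‖x‖ ≤ 1 and every t > 0, inf{ ‖[[t·I, x],[y, t·I]]‖ : y ∈ X, ‖y‖ ≤ 1 } ≤ √(t² + 1). Then X is selfadjoint, i.e. X* = X. -/

import Mathlib

open ContinuousLinearMap in
/-- The block operator `[[a, b], [c, d]]` on the Hilbert space `H ⊕₂ H`,
realizing the canonical C*-norm on `M₂(B(H))`. -/
noncomputable def blockOp {H : Type*} [NormedAddCommGroup H] [InnerProductSpace ℂ H]
    (a b c d : H →L[ℂ] H) : WithLp 2 (H × H) →L[ℂ] WithLp 2 (H × H) :=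
  (((WithLp.prodContinuousLinearEquiv 2 ℂ H H).symm : H × H →L[ℂ] WithLp 2 (H × H)).comp
    ((a.comp (fst ℂ H H) + b.comp (snd ℂ H H)).prod
      (c.comp (fst ℂ H H) + d.comp (snd ℂ H H)))).comp
    ((WithLp.prodContinuousLinearEquiv 2 ℂ H H) : WithLp 2 (H × H) →L[ℂ] H × H)

open ContinuousLinearMap in
lemma blockKey {H : Type*} [NormedAddCommGroup H] [InnerProductSpace ℂ H] [CompleteSpace H]
    (x y : H →L[ℂ] H) {t δ : ℝ} (ht : 0 < t) (hδ : 0 ≤ δ)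
    (hb : ‖blockOp ((t : ℂ) • 1) x y ((t : ℂ) • 1)‖ ^ 2 ≤ t ^ 2 + 1 + δ) :
    ‖x + adjoint y‖ ≤ (1 + δ) / t := by
  set T := blockOp ((t : ℂ) • 1) x y ((t : ℂ) • 1) with hT
  apply opNorm_le_bound _ (by positivity)
  intro η
  set v := (x + adjoint y) η with hv
  by_cases hv0 : v = 0
  · rw [hv0, norm_zero]; positivity
  have hη0 : η ≠ 0 := by rintro rfl; exact hv0 (by simp [hv])
  have hηpos : (0:ℝ) < ‖η‖ := norm_pos_iff.mpr hη0
  have hvpos : (0:ℝ) < ‖v‖ := norm_pos_iff.mpr hv0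
  set ξ := (‖η‖ / ‖v‖) • v with hξdef
  have hξ : ‖ξ‖ = ‖η‖ := by
    rw [hξdef, norm_smul, Real.norm_eq_abs, abs_of_nonneg (by positivity)]
    field_simp
  set w := (WithLp.equiv 2 (H × H)).symm (ξ, η) with hw
  have happ : T w = (WithLp.equiv 2 (H × H)).symm
      (((t : ℂ) • (1 : H →L[ℂ] H)) ξ + x η, y ξ + ((t : ℂ) • (1 : H →L[ℂ] H)) η) := rfl
  have hTw : ‖T w‖ ^ 2 = ‖(t : ℂ) • ξ + x η‖ ^ 2 + ‖y ξ + (t : ℂ) • η‖ ^ 2 := by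
    rw [happ, WithLp.prod_norm_sq_eq_of_L2]
    simp [smul_apply, one_apply]
  have hwn : ‖w‖ ^ 2 = ‖ξ‖ ^ 2 + ‖η‖ ^ 2 := by
    rw [hw, WithLp.prod_norm_sq_eq_of_L2]; rfl
  have hmain : ‖T w‖ ^ 2 ≤ (t ^ 2 + 1 + δ) * (‖ξ‖ ^ 2 + ‖η‖ ^ 2) := by
    have h1 : ‖T w‖ ≤ ‖T‖ * ‖w‖ := T.le_opNorm w
    have h2 : ‖T w‖ ^ 2 ≤ ‖T‖ ^ 2 * ‖w‖ ^ 2 := by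
      rw [← mul_pow]; exact pow_le_pow_left₀ (norm_nonneg _) h1 2
    calc ‖T w‖ ^ 2 ≤ ‖T‖ ^ 2 * ‖w‖ ^ 2 := h2
      _ ≤ (t ^ 2 + 1 + δ) * (‖ξ‖ ^ 2 + ‖η‖ ^ 2) := by
          rw [← hwn]; exact mul_le_mul_of_nonneg_right hb (by positivity)
  set A := RCLike.re (inner ℂ ξ (x η) : ℂ) with hA
  set B := RCLike.re (inner ℂ (y ξ) η : ℂ) with hB
  have e1 : ‖(t : ℂ) • ξ + x η‖ ^ 2 = t ^ 2 * ‖ξ‖ ^ 2 + 2 * (t * A) + ‖x η‖ ^ 2 := by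
    rw [@norm_add_sq ℂ]
    rw [inner_smul_left]
    simp [Complex.conj_ofReal, norm_smul, hA]
    rw [mul_pow, sq_abs]
  have e2 : ‖y ξ + (t : ℂ) • η‖ ^ 2 = ‖y ξ‖ ^ 2 + 2 * (t * B) + t ^ 2 * ‖η‖ ^ 2 := by
    rw [@norm_add_sq ℂ]
    rw [inner_smul_right]
    simp [norm_smul, hB]
    rw [mul_pow, sq_abs]
  have e3 : A + B = ‖η‖ * ‖v‖ := by
    have hB' : B = RCLike.re (inner ℂ ξ ((adjoint y) η) : ℂ) := by
      rw [hB, adjoint_inner_right]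
    have : A + B = RCLike.re (inner ℂ ξ v : ℂ) := by
      rw [hA, hB', hv, ← map_add, ← inner_add_right]
      simp [inner_add_right]
    rw [this, hξdef, RCLike.real_smul_eq_coe_smul (K := ℂ), inner_smul_left]
    simp [Complex.conj_ofReal, inner_self_eq_norm_sq (𝕜 := ℂ) v]
    field_simp
    ring
    rw [← Complex.ofReal_pow, Complex.ofReal_re]
  rw [div_mul_eq_mul_div, le_div_iff₀ ht]
  have H1 : t ^ 2 * ‖ξ‖ ^ 2 + 2 * (t * A) + ‖x η‖ ^ 2
      + (‖y ξ‖ ^ 2 + 2 * (t * B) + t ^ 2 * ‖η‖ ^ 2)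
      ≤ (t ^ 2 + 1 + δ) * (‖ξ‖ ^ 2 + ‖η‖ ^ 2) := by
    rw [← e1, ← e2, ← hTw]; exact hmain
  rw [hξ] at H1
  have key2 : t * (A + B) ≤ (1 + δ) * ‖η‖ ^ 2 := by nlinarith [sq_nonneg ‖x η‖, sq_nonneg ‖y ξ‖]
  rw [e3] at key2
  refine le_of_mul_le_mul_right ?_ hηpos
  rw [show ‖v‖ * t * ‖η‖ = t * (‖η‖ * ‖v‖) from by ring,
    show (1 + δ) * ‖η‖ * ‖η‖ = (1 + δ) * ‖η‖ ^ 2 from by ring]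
  exact key2

open ContinuousLinearMap in
lemma stmt14_aux {H : Type*} [NormedAddCommGroup H] [InnerProductSpace ℂ H] [CompleteSpace H]
    (X : Submodule ℂ (H →L[ℂ] H)) (hX : IsClosed (X : Set (H →L[ℂ] H)))
    (h : ∀ x ∈ X, ‖x‖ ≤ 1 → ∀ t : ℝ, 0 < t →
      sInf {r : ℝ | ∃ y ∈ X, ‖y‖ ≤ 1 ∧ r = ‖blockOp ((t : ℂ) • 1) x y ((t : ℂ) • 1)‖}
        ≤ Real.sqrt (t ^ 2 + 1))
    (x : H →L[ℂ] H) (hx : x ∈ X) (hx1 : ‖x‖ ≤ 1) : star x ∈ X := by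
  have hmem : (-(star x) : H →L[ℂ] H) ∈ closure (X : Set (H →L[ℂ] H)) := by
    rw [Metric.mem_closure_iff]
    intro ε hε
    obtain ⟨t, ht, ht1, h6t⟩ : ∃ t : ℝ, 0 < t ∧ 1 ≤ t ∧ 6 / t < ε := by
      refine ⟨6 / ε + 1, by positivity, by linarith [div_pos (by norm_num : (0:ℝ) < 6) hε], ?_⟩
      rw [div_lt_iff₀ (by positivity)]
      have he : ε * (6 / ε + 1) = 6 + ε := by field_simp
      rw [he]; linarith
    have hSne : Set.Nonempty
        {r : ℝ | ∃ y ∈ X, ‖y‖ ≤ 1 ∧ r = ‖blockOp ((t : ℂ) • 1) x y ((t : ℂ) • 1)‖} :=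
      ⟨_, 0, X.zero_mem, by simp, rfl⟩
    have hinf := h x hx hx1 t ht
    obtain ⟨r, hrS, hrlt⟩ := Real.lt_sInf_add_pos hSne (show (0:ℝ) < 1/t by positivity)
    obtain ⟨y, hyX, hy1, hry⟩ := hrS
    have hsqrt : Real.sqrt (t ^ 2 + 1) ≤ t + 1 := by
      rw [show t + 1 = Real.sqrt ((t+1)^2) from (Real.sqrt_sq (by positivity)).symm]
      apply Real.sqrt_le_sqrt; nlinarith
    have hrpos : 0 ≤ r := hry ▸ norm_nonneg _
    set δ : ℝ := 2 * (t + 1) / t + 1 / t ^ 2 with hδdef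
    have hδ0 : 0 ≤ δ := by positivity
    have hbound : ‖blockOp ((t : ℂ) • 1) x y ((t : ℂ) • 1)‖ ^ 2 ≤ t ^ 2 + 1 + δ := by
      rw [← hry]
      have hr : r ≤ Real.sqrt (t ^ 2 + 1) + 1 / t := by linarith
      have h2 : r ^ 2 ≤ (Real.sqrt (t ^ 2 + 1) + 1 / t) ^ 2 :=
        pow_le_pow_left₀ hrpos hr 2
      have hsq : Real.sqrt (t ^ 2 + 1) ^ 2 = t ^ 2 + 1 := Real.sq_sqrt (by positivity)
      have hsnn : 0 ≤ Real.sqrt (t ^ 2 + 1) := Real.sqrt_nonneg _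
      calc r ^ 2 ≤ (Real.sqrt (t ^ 2 + 1) + 1 / t) ^ 2 := h2
        _ = t ^ 2 + 1 + (2 * Real.sqrt (t ^ 2 + 1) / t + 1 / t ^ 2) := by
            rw [add_sq, hsq]; ring
        _ ≤ t ^ 2 + 1 + δ := by
            have hd : 2 * Real.sqrt (t ^ 2 + 1) / t ≤ 2 * (t + 1) / t := by
              gcongr
            rw [hδdef]; linarith
    have hkey := blockKey x y ht hδ0 hbound
    have hδle : δ ≤ 5 := by
      rw [hδdef]
      have h1 : 2 * (t + 1) / t = 2 + 2 / t := by field_simp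
      have h2 : 2 / t ≤ 2 := by rw [div_le_iff₀ ht]; nlinarith
      have h3 : 1 / t ^ 2 ≤ 1 := by rw [div_le_one (by positivity)]; nlinarith
      linarith
    have hfinal : ‖x + adjoint y‖ < ε := by
      have h6 : (1 + δ) / t ≤ 6 / t := by gcongr; linarith
      linarith
    refine ⟨y, hyX, ?_⟩
    rw [dist_eq_norm]
    rw [show -star x - y = -(star x + y) from by abel, norm_neg]
    have hadj : (star x + y : H →L[ℂ] H) = adjoint (x + adjoint y) := by
      rw [map_add, adjoint_adjoint, star_eq_adjoint]
    calc ‖star x + y‖ = ‖adjoint (x + adjoint y)‖ := by rw [hadj]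
      _ = ‖x + adjoint y‖ := LinearIsometryEquiv.norm_map _ _
      _ < ε := hfinal
  rw [hX.closure_eq] at hmem
  have := X.neg_mem hmem
  simpa using this

/-- If `X` is a closed unital subspace of `B(H)` such that for each contraction `x ∈ X`
and `t > 0`, `inf { ‖[[t·I, x], [y, t·I]]‖ : y ∈ X, ‖y‖ ≤ 1 } ≤ √(t² + 1)`, then `X` is
selfadjoint. -/
theorem stmt14 {H : Type*} [NormedAddCommGroup H] [InnerProductSpace ℂ H] [CompleteSpace H]
    (X : Submodule ℂ (H →L[ℂ] H)) (hX : IsClosed (X : Set (H →L[ℂ] H)))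
    (h1 : (1 : H →L[ℂ] H) ∈ X)
    (h : ∀ x ∈ X, ‖x‖ ≤ 1 → ∀ t : ℝ, 0 < t →
      sInf {r : ℝ | ∃ y ∈ X, ‖y‖ ≤ 1 ∧ r = ‖blockOp ((t : ℂ) • 1) x y ((t : ℂ) • 1)‖}
        ≤ Real.sqrt (t ^ 2 + 1)) :
    ∀ x ∈ X, star x ∈ X := by
  intro x hx
  by_cases hx0 : x = 0
  · simp [hx0]
  have hn : (0:ℝ) < ‖x‖ := norm_pos_iff.mpr hx0
  set c : ℂ := ((‖x‖ : ℝ) : ℂ)⁻¹ with hc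
  have hcx : c • x ∈ X := X.smul_mem c hx
  have hnorm : ‖c • x‖ ≤ 1 := by
    rw [norm_smul, hc]
    simp [norm_inv, Complex.norm_real, abs_of_pos hn]
    rw [inv_mul_cancel₀ hn.ne']
  have hstar := stmt14_aux X hX h (c • x) hcx hnorm
  have hsc : star (c • x) = c • star x := by
    rw [star_smul, hc]
    simp [Complex.conj_ofReal]
  rw [hsc] at hstar
  have := X.smul_mem ((‖x‖ : ℝ) : ℂ) hstar
  rwa [smul_smul, mul_inv_cancel₀ (by exact_mod_cast hn.ne'), one_smul] at this
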